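/- Let n ≥ 3, let T be a strong tournament on {1,…,n}, and let u, v be distinct vertices with (u, v) not an edge of T. Then ℓ(T, (u→v)) = 4·d_T(u, v) − 2, where d_T(u, v) is the length of a shortest directed path from u to v in T. -/

import Mathlib

noncomputable section

variable {V : Type*}

/-- The arc `(a→b)`: the map sending `a` to `b` and fixing every other point. -/
def arcMap [DecidableEq V] (a b : V) : V → V := fun x => if x = a then b else x

/-- Evaluate a word of arcs, applying the arcs from left to right. -/
def wordEval [DecidableEq V] (w : List (V × V)) : V → V :=
  fun x => w.foldl (fun y e => arcMap e.1 e.2 y) x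

/-- `α ∈ ⟨D⟩`: `α` is a (nonempty) product of arcs of the digraph `D`. -/
def InGen [DecidableEq V] (D : V → V → Prop) (α : V → V) : Prop :=
  ∃ w : List (V × V), w ≠ [] ∧ (∀ e ∈ w, D e.1 e.2) ∧ wordEval w = α

/-- `ℓ(D, α)`: the minimal length of a word in the arcs of `D` expressing `α`. -/
def arcLen [DecidableEq V] (D : V → V → Prop) (α : V → V) : ℕ :=
  sInf {k | ∃ w : List (V × V), w.length = k ∧ (∀ e ∈ w, D e.1 e.2) ∧ wordEval w = α}

/-- `fix(α)`: the number of fixed points of `α`. -/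
def fixCnt (α : V → V) : ℕ := Set.ncard {x | α x = x}

/-- `rk(α)`: the rank of `α`, i.e. the cardinality of its image. -/
def rnk (α : V → V) : ℕ := Set.ncard (Set.range α)

/-- A set `C` is a cyclic orbit of `α` if it is a weakly connected component of the
functional digraph of `α` (edges `(x, α x)`) which is a directed cycle on at least two
vertices: equivalently, `C` is the forward orbit of a periodic point, has at least two
elements, and is closed under taking preimages. -/
def IsCyclicOrbit (α : V → V) (C : Set V) : Prop :=
  2 ≤ C.ncard ∧ (∃ x ∈ C, (∃ k, 0 < k ∧ α^[k] x = x) ∧ C = {y | ∃ k, α^[k] x = y}) ∧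
    ∀ y : V, α y ∈ C → y ∈ C

/-- `cycl(α)`: the number of cyclic orbits of `α`. -/
def cyclCnt (α : V → V) : ℕ := Set.ncard {C : Set V | IsCyclicOrbit α C}

/-- `D` is connected: any two vertices are joined by a directed path in some direction. -/
def ConnectedDigraph (D : V → V → Prop) : Prop :=
  ∀ u v : V, Relation.ReflTransGen D u v ∨ Relation.ReflTransGen D v u

/-- `D` is closed (equal to its closure): whenever `(b,a)` is an edge lying on a directed
cycle of `D` (i.e. there is a directed path from `a` back to `b`), `(a,b)` is also an edge. -/
def ClosedDigraph (D : V → V → Prop) : Prop :=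
  ∀ a b : V, D b a → Relation.ReflTransGen D a b → D a b

/-- Property (★): if `v0, v1, v2` is a directed path with `d_D(v0,v2) = 2`, then every
out-neighbour of `v1` and of `v2` lies in `{v0, v1, v2}`. -/
def StarCond (D : V → V → Prop) : Prop :=
  ∀ v0 v1 v2 : V, D v0 v1 → D v1 v2 → v0 ≠ v2 → ¬ D v0 v2 →
    ∀ u : V, (D v1 u ∨ D v2 u) → (u = v0 ∨ u = v1 ∨ u = v2)

/-- `C` is a strong component of `D`. -/
def IsSC (D : V → V → Prop) (C : Set V) : Prop :=
  ∃ v : V, C = {u | Relation.ReflTransGen D u v ∧ Relation.ReflTransGen D v u}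

/-- `C1` connects to `C2`: some edge goes from `C1` to `C2`. -/
def ConnectsTo (D : V → V → Prop) (C1 C2 : Set V) : Prop :=
  ∃ v1 ∈ C1, ∃ v2 ∈ C2, D v1 v2

/-- `C1` fully connects to `C2`: all pairs are edges. -/
def FullyConnects (D : V → V → Prop) (C1 C2 : Set V) : Prop :=
  ∀ v1 ∈ C1, ∀ v2 ∈ C2, D v1 v2

/-- A terminal strong component: it connects to no other strong component. -/
def IsTerminalSC (D : V → V → Prop) (C : Set V) : Prop :=
  IsSC D C ∧ ∀ C' : Set V, IsSC D C' → C' ≠ C → ¬ ConnectsTo D C C'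

/-- Property (★★): nonterminal strong components have at most 2 vertices and terminal
strong components have at most 3 vertices. -/
def StarStarCond (D : V → V → Prop) : Prop :=
  ∀ C : Set V, IsSC D C →
    (IsTerminalSC D C → C.ncard ≤ 3) ∧ (¬ IsTerminalSC D C → C.ncard ≤ 2)

/-- The induced subdigraph on `C` is an undirected path `a - b - c` on three vertices. -/
def IsP3 (D : V → V → Prop) (C : Set V) : Prop :=
  ∃ a b c : V, a ≠ b ∧ b ≠ c ∧ a ≠ c ∧ C = {a, b, c} ∧
    ∀ u ∈ C, ∀ w ∈ C,
      (D u w ↔ (u = a ∧ w = b) ∨ (u = b ∧ w = a) ∨ (u = b ∧ w = c) ∨ (u = c ∧ w = b))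

/-- `D` has a subdigraph isomorphic to `H`: an injection mapping edges of `H` to edges of `D`. -/
def HasSubdigraph (D : V → V → Prop) {m : ℕ} (H : Fin m → Fin m → Prop) : Prop :=
  ∃ f : Fin m → V, Function.Injective f ∧ ∀ i j : Fin m, H i j → D (f i) (f j)

/-- `Θ_k`: the directed cycle on `k` vertices. -/
def Theta (k : ℕ) : Fin k → Fin k → Prop := fun i j => (j : ℕ) = ((i : ℕ) + 1) % k

/-- `Γ1` (vertices relabelled from `{1,…,5}` to `{0,…,4}`). -/
def Gamma1 : Fin 5 → Fin 5 → Prop := fun i j =>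
  ((i : ℕ), (j : ℕ)) ∈ [(0,3),(3,0),(1,3),(3,1),(2,3),(3,2),(3,4)]

/-- `Γ2` (vertices relabelled from `{1,…,5}` to `{0,…,4}`). -/
def Gamma2 : Fin 5 → Fin 5 → Prop := fun i j =>
  ((i : ℕ), (j : ℕ)) ∈ [(0,2),(2,0),(1,2),(2,1),(2,3),(3,2),(3,4)]

/-- `Γ3` (vertices relabelled from `{1,…,4}` to `{0,…,3}`). -/
def Gamma3 : Fin 4 → Fin 4 → Prop := fun i j =>
  ((i : ℕ), (j : ℕ)) ∈ [(0,1),(1,2),(2,0),(2,3)]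

/-- `Γ4` (vertices relabelled from `{1,…,5}` to `{0,…,4}`). -/
def Gamma4 : Fin 5 → Fin 5 → Prop := fun i j =>
  ((i : ℕ), (j : ℕ)) ∈ [(0,1),(1,2),(2,3),(3,0),(3,4)]

/-- No subdigraph isomorphic to `Γ1`, `Γ2`, `Γ3`, `Γ4` or `Θ_k` for `k ≥ 5`. -/
def ForbiddenFree (D : V → V → Prop) : Prop :=
  ¬ HasSubdigraph D Gamma1 ∧ ¬ HasSubdigraph D Gamma2 ∧ ¬ HasSubdigraph D Gamma3 ∧
    ¬ HasSubdigraph D Gamma4 ∧ ∀ k : ℕ, 5 ≤ k → ¬ HasSubdigraph D (Theta k)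

/-- `D` is acyclic: it has no directed cycle. -/
def AcyclicRel (D : V → V → Prop) : Prop := ∀ v : V, ¬ Relation.TransGen D v v

/-- `ψ_A(u,w)`: the maximal number of edges of a directed path from `u` to `w` in `A`
(in particular `ψ_A(u,u) = 0`). -/
def psiLongest (A : V → V → Prop) (u w : V) : ℕ :=
  sSup {l | ∃ p : List V, p.Chain' A ∧ p.Nodup ∧
    p.head? = some u ∧ p.getLast? = some w ∧ p.length = l + 1}

/-- `d_D(u,w)`: the minimal number of edges of a directed path from `u` to `w` in `D`. -/
def ddist (D : V → V → Prop) (u w : V) : ℕ :=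
  sInf {l | ∃ p : List V, p.Chain' D ∧ p.head? = some u ∧ p.getLast? = some w ∧
    p.length = l + 1}

/-- A tournament: no loops, and exactly one of `(u,v)`, `(v,u)` is an edge for `u ≠ v`. -/
def IsTournament (D : V → V → Prop) : Prop :=
  (∀ v : V, ¬ D v v) ∧ ∀ u v : V, u ≠ v → (D u v ∨ D v u) ∧ ¬ (D u v ∧ D v u)

/-- A strong (strongly connected) digraph. -/
def IsStrongDigraph (D : V → V → Prop) : Prop :=
  ∀ u v : V, Relation.ReflTransGen D u v

namespace Stmt18Aux

theorem wordEval_append [DecidableEq V] (w1 w2 : List (V × V)) (x : V) :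
    wordEval (w1 ++ w2) x = wordEval w2 (wordEval w1 x) := by
  simp [wordEval, List.foldl_append]

theorem wordEval_cons [DecidableEq V] (e : V × V) (w : List (V × V)) (x : V) :
    wordEval (e :: w) x = wordEval w (arcMap e.1 e.2 x) := rfl

theorem wordEval_nil [DecidableEq V] (x : V) : wordEval ([] : List (V × V)) x = x := rfl

theorem arcMap_ne_self {a b x : V} [DecidableEq V] (h : arcMap a b x ≠ x) : x = a := by
  by_contra hx; simp [arcMap, hx] at h

theorem arcMap_ne_src {a b x : V} [DecidableEq V] (hab : a ≠ b) : arcMap a b x ≠ a := by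
  unfold arcMap; split_ifs with h
  · exact fun hc => hab hc.symm
  · exact h

/-- From reflexive-transitive closure, get a chain list. -/
theorem chain_of_rtg {R : V → V → Prop} {a b : V} (h : Relation.ReflTransGen R a b) :
    ∃ l : List V, l.Chain' R ∧ l.head? = some a ∧ l.getLast? = some b := by
  induction h with
  | refl => exact ⟨[a], List.isChain_singleton _, by simp, by simp⟩
  | @tail b c hab hbc ih =>
    obtain ⟨l, hc, hh, hl⟩ := ih
    have hne : l ≠ [] := by rintro rfl; simp at hh
    refine ⟨l ++ [c], ?_, ?_, by simp⟩
    · apply List.isChain_append.2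
      refine ⟨hc, by simp, ?_⟩
      intro x hx y hy
      simp only [List.head?_cons, Option.mem_def, Option.some.injEq] at hy
      subst hy
      rw [hl] at hx
      simp only [Option.mem_def, Option.some.injEq] at hx
      subst hx; exact hbc
    · rw [List.head?_append_of_ne_nil] <;> simp [hne, hh]

/-- Extract a nodup chain with same endpoints and no greater length. -/
theorem chain_extract {R : V → V → Prop} [DecidableEq V] :
    ∀ (l : List V), l.Chain' R → l ≠ [] →
    ∃ q : List V, q.Chain' R ∧ q.Nodup ∧ q.head? = l.head? ∧ q.getLast? = l.getLast? ∧
      q.length ≤ l.length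
  | [], _, h => absurd rfl h
  | [a], _, _ => ⟨[a], List.isChain_singleton _, by simp, rfl, rfl, le_refl _⟩
  | a :: b :: l, hc, _ => by
    have hc' : (b :: l).Chain' R := (List.isChain_cons.1 hc).2
    obtain ⟨q, hqc, hqn, hqh, hql, hqlen⟩ := chain_extract (b :: l) hc' (by simp)
    have hqne : q ≠ [] := by rintro rfl; simp at hqh
    by_cases hmem : a ∈ q
    · obtain ⟨s, t, rfl⟩ := List.append_of_mem hmem
      refine ⟨a :: t, ?_, ?_, by simp, ?_, ?_⟩
      · exact hqc.suffix ⟨s, rfl⟩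
      · exact ((List.suffix_append s (a :: t)).sublist).nodup hqn
      · rw [List.getLast?_cons_cons, ← hql, List.getLast?_append_of_ne_nil _ (by simp : (a :: t) ≠ [])]
      · have h1 : (a :: t).length ≤ (s ++ a :: t).length := by simp
        have h2 : (b :: l).length ≤ (a :: b :: l).length := by simp
        omega
    · refine ⟨a :: q, List.isChain_cons.2 ⟨?_, hqc⟩, by simp [hqn, hmem], by simp, ?_, ?_⟩
      · intro y hy
        rw [hqh] at hy
        simp only [List.head?_cons, Option.mem_def, Option.some.injEq] at hy
        subst hy
        exact (List.isChain_cons.1 hc).1 _ (by simp)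
      · rw [show (a :: q) = [a] ++ q by simp, List.getLast?_append_of_ne_nil _ hqne]
        rw [hql]
        rw [show (a :: b :: l) = [a] ++ (b :: l) by simp, List.getLast?_append_of_ne_nil _ (by simp)]
      · simp only [List.length_cons] at *; omega


/-- A constant-or-step trajectory yields a chain whose length counts the strict steps. -/
theorem traj_chain {T : V → V → Prop} (g : ℕ → V) (s : ℕ) [DecidableEq V] :
    ∀ (e : ℕ), s ≤ e → (∀ j, s ≤ j → j < e → g (j+1) = g j ∨ T (g j) (g (j+1))) →
    ∃ p : List V, p.Chain' T ∧ p.head? = some (g s) ∧ p.getLast? = some (g e) ∧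
      p.length = 1 + ((Finset.Ico s e).filter (fun j => g (j+1) ≠ g j)).card := by
  intro e
  induction e with
  | zero =>
    intro hse _
    have : s = 0 := Nat.le_zero.1 hse
    subst this
    exact ⟨[g 0], List.isChain_singleton _, by simp, by simp, by simp⟩
  | succ e ih =>
    intro hse hstep
    rcases Nat.lt_or_ge s (e+1) with hlt | hge
    swap
    · have hs : s = e + 1 := le_antisymm hse hge
      exact ⟨[g s], List.isChain_singleton _, by simp, by simp [hs], by simp [hs]⟩
    have hse' : s ≤ e := by omega
    obtain ⟨p, hpc, hph, hpl, hplen⟩ := ih hse' (fun j h1 h2 => hstep j h1 (by omega))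
    have hins : Finset.Ico s (e+1) = insert e (Finset.Ico s e) := by
      rw [Nat.Ico_succ_right_eq_insert_Ico hse']
    have hnm : e ∉ Finset.Ico s e := by simp
    by_cases hee : g (e+1) = g e
    · refine ⟨p, hpc, hph, by rw [hpl, hee], ?_⟩
      rw [hplen, hins, Finset.filter_insert]
      simp [hee]
    · have hT : T (g e) (g (e+1)) := by
        rcases hstep e hse' (by omega) with h | h
        · exact absurd h hee
        · exact h
      have hpne : p ≠ [] := by rintro rfl; simp at hph
      refine ⟨p ++ [g (e+1)], ?_, ?_, by simp, ?_⟩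
      · apply List.isChain_append.2
        refine ⟨hpc, by simp, ?_⟩
        intro x hx y hy
        simp only [List.head?_cons, Option.mem_def, Option.some.injEq] at hy
        subst hy
        rw [hpl] at hx
        simp only [Option.mem_def, Option.some.injEq] at hx
        subst hx; exact hT
      · rw [List.head?_append_of_ne_nil] <;> simp [hpne, hph]
      · rw [List.length_append, hplen, hins, Finset.filter_insert, if_pos hee,
          Finset.card_insert_of_notMem (by simp)]
        simp only [List.length_cons, List.length_nil]
        omega
/-- If no strict steps occur between s and e, the trajectory is constant. -/
theorem traj_const {g : ℕ → V} (s : ℕ) :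
    ∀ (e : ℕ), s ≤ e → (∀ j, s ≤ j → j < e → g (j+1) = g j) → g e = g s := by
  intro e
  induction e with
  | zero => intro h _; have : s = 0 := Nat.le_zero.1 h; rw [this]
  | succ e ih =>
    intro hse hsteps
    rcases Nat.lt_or_ge s (e+1) with hlt | hge
    · have hse' : s ≤ e := by omega
      rw [hsteps e hse' (by omega)]
      exact ih hse' (fun j h1 h2 => hsteps j h1 (by omega))
    · have : s = e + 1 := le_antisymm hse hge
      rw [this]

/-! ### The construction word -/

def casc (p : ℕ → V) : ℕ → List (V × V)
  | 0 => []
  | (m+1) => (p m, p (m+1)) :: casc p m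

def zig (p : ℕ → V) : ℕ → ℕ → List (V × V)
  | _, 0 => []
  | i, (c+1) => (p (i+1), p (i-1)) :: (p i, p (i+1)) :: zig p (i+1) c

@[simp] theorem casc_length (p : ℕ → V) : ∀ m, (casc p m).length = m
  | 0 => rfl
  | (m+1) => by simp [casc, casc_length p m]

@[simp] theorem zig_length (p : ℕ → V) : ∀ c i, (zig p i c).length = 2 * c
  | 0, _ => rfl
  | (c+1), i => by simp [zig, zig_length p c (i+1)]; ring

theorem casc_edges {T : V → V → Prop} {p : ℕ → V} :
    ∀ m, (∀ t, t < m → T (p t) (p (t+1))) → ∀ e ∈ casc p m, T e.1 e.2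
  | 0 => by simp [casc]
  | (m+1) => by
    intro hp e he
    simp only [casc, List.mem_cons] at he
    rcases he with rfl | he
    · exact hp m (by omega)
    · exact casc_edges m (fun t ht => hp t (by omega)) e he

theorem zig_edges {T : V → V → Prop} {p : ℕ → V} :
    ∀ c i, (∀ t, i ≤ t → t < i + c → T (p (t+1)) (p (t-1)) ∧ T (p t) (p (t+1))) →
      ∀ e ∈ zig p i c, T e.1 e.2
  | 0, _ => by simp [zig]
  | (c+1), i => by
    intro hp e he
    simp only [zig, List.mem_cons] at he
    rcases he with rfl | rfl | he
    · exact (hp i (le_refl _) (by omega)).1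
    · exact (hp i (le_refl _) (by omega)).2
    · exact zig_edges c (i+1) (fun t h1 h2 => hp t (by omega) (by omega)) e he

section Eval
variable [DecidableEq V] {p : ℕ → V} {D : ℕ}
variable (hinj : ∀ i ≤ D, ∀ j ≤ D, p i = p j → i = j)

theorem casc_fix : ∀ m, ∀ x : V, (∀ t, t < m → x ≠ p t) → wordEval (casc p m) x = x
  | 0, x, _ => rfl
  | (m+1), x, hx => by
    rw [casc, wordEval_cons]
    have : arcMap (p m) (p (m+1)) x = x := by
      simp [arcMap, hx m (by omega)]
    rw [this]
    exact casc_fix m x (fun t ht => hx t (by omega))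

include hinj in
theorem casc_move : ∀ m, m ≤ D → ∀ j, j < m → wordEval (casc p m) (p j) = p (j+1) := by
  intro m
  induction m with
  | zero => omega
  | succ m ih =>
    intro hm j hj
    rw [casc, wordEval_cons]
    rcases Nat.lt_or_ge j m with hlt | hge
    · have hne : p j ≠ p m := fun h => by
        have := hinj j (by omega) m (by omega) h; omega
      have harc : arcMap (p m) (p (m+1)) (p j) = p j := by simp [arcMap, hne]
      rw [harc]
      exact ih (by omega) j hlt
    · have : j = m := by omega
      subst this
      have : arcMap (p j) (p (j+1)) (p j) = p (j+1) := by simp [arcMap]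
      rw [this]
      exact casc_fix j (p (j+1)) (fun t ht h => by
        have := hinj (j+1) (by omega) t (by omega) h
        omega)

theorem zig_fix : ∀ c i, ∀ x : V, (∀ t, i ≤ t → t ≤ i + c → x ≠ p t) →
    wordEval (zig p i c) x = x
  | 0, _, _, _ => rfl
  | (c+1), i, x, hx => by
    rw [zig, wordEval_cons, wordEval_cons]
    have h1 : arcMap (p (i+1)) (p (i-1)) x = x := by
      simp [arcMap, hx (i+1) (by omega) (by omega)]
    have h2 : arcMap (p i) (p (i+1)) x = x := by
      simp [arcMap, hx i (le_refl _) (by omega)]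
    rw [h1, h2]
    exact zig_fix c (i+1) x (fun t h1 h2 => hx t (by omega) (by omega))

include hinj in
theorem zig_adv : ∀ c i, 1 ≤ i → i + c ≤ D → wordEval (zig p i c) (p i) = p (i + c) := by
  intro c
  induction c with
  | zero => intro i _ _; rfl
  | succ c ih =>
    intro i h1 h2
    rw [zig, wordEval_cons, wordEval_cons]
    have hne : p i ≠ p (i+1) := fun h => by
      have := hinj i (by omega) (i+1) (by omega) h; omega
    have e1 : arcMap (p (i+1)) (p (i-1)) (p i) = p i := by
      simp [arcMap, hne]
    have e2 : arcMap (p i) (p (i+1)) (p i) = p (i+1) := by simp [arcMap]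
    rw [e1, e2]
    have := ih (i+1) (by omega) (by omega)
    rw [this]
    congr 1
    omega

include hinj in
theorem zig_back : ∀ c i j, 1 ≤ i → i ≤ j → j < i + c → i + c ≤ D →
    wordEval (zig p i c) (p (j+1)) = p (j - 1) := by
  intro c
  induction c with
  | zero => omega
  | succ c ih =>
    intro i j h1 hij hj hD
    rw [zig, wordEval_cons, wordEval_cons]
    rcases Nat.eq_or_lt_of_le hij with rfl | hlt
    · have e1 : arcMap (p (i+1)) (p (i-1)) (p (i+1)) = p (i-1) := by simp [arcMap]
      rw [e1]
      have e2 : arcMap (p i) (p (i+1)) (p (i-1)) = p (i-1) := by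
        have : p (i-1) ≠ p i := fun h => by
          have := hinj (i-1) (by omega) i (by omega) h; omega
        simp [arcMap, this]
      rw [e2]
      exact zig_fix c (i+1) (p (i-1)) (fun t ht1 ht2 h => by
        have := hinj (i-1) (by omega) t (by omega) h; omega)
    · have e1 : arcMap (p (i+1)) (p (i-1)) (p (j+1)) = p (j+1) := by
        have : p (j+1) ≠ p (i+1) := fun h => by
          have := hinj (j+1) (by omega) (i+1) (by omega) h; omega
        simp [arcMap, this]
      have e2 : arcMap (p i) (p (i+1)) (p (j+1)) = p (j+1) := by
        have : p (j+1) ≠ p i := fun h => by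
          have := hinj (j+1) (by omega) i (by omega) h; omega
        simp [arcMap, this]
      rw [e1, e2]
      exact ih (i+1) j (by omega) (by omega) (by omega) (by omega)

end Eval


def fullWord (p : ℕ → V) (D : ℕ) : List (V × V) :=
  (p D, p 0) :: (casc p D ++ zig p 1 (D-1) ++ casc p (D-1))

theorem fullWord_length (p : ℕ → V) {D : ℕ} (hD : 2 ≤ D) :
    (fullWord p D).length = 4 * D - 2 := by
  simp [fullWord]
  omega

section FullEval
variable [DecidableEq V] {p : ℕ → V} {D : ℕ}

theorem fullWord_eval (hinj : ∀ i ≤ D, ∀ j ≤ D, p i = p j → i = j) (hD : 2 ≤ D) :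
    wordEval (fullWord p D) = arcMap (p 0) (p D) := by
  have hD1 : 1 + (D - 1) = D := by omega
  have pne : ∀ i ≤ D, ∀ j ≤ D, i ≠ j → p i ≠ p j := fun i hi j hj hij h =>
    hij (hinj i hi j hj h)
  funext x
  rw [fullWord, wordEval_cons, wordEval_append, wordEval_append]
  by_cases hx : ∃ t ≤ D, x = p t
  · obtain ⟨t, htD, rfl⟩ := hx
    by_cases ht0 : t = 0
    · subst ht0
      have e0 : arcMap (p D) (p 0) (p 0) = p 0 := by
        simp [arcMap, pne 0 (by omega) D (le_refl D) (by omega)]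
      rw [e0, casc_move hinj D (le_refl _) 0 (by omega)]
      have e1 : wordEval (zig p 1 (D-1)) (p 1) = p D := by
        have := zig_adv hinj (D-1) 1 (le_refl _) (by omega)
        rwa [hD1] at this
      rw [e1, casc_fix (D-1) (p D) (fun s hs => pne D (le_refl _) s (by omega) (by omega))]
      simp [arcMap]
    by_cases htD' : t = D
    · rw [htD']
      have e0 : arcMap (p D) (p 0) (p D) = p 0 := by simp [arcMap]
      rw [e0, casc_move hinj D (le_refl _) 0 (by omega)]
      have e1 : wordEval (zig p 1 (D-1)) (p 1) = p D := by
        have := zig_adv hinj (D-1) 1 (le_refl _) (by omega)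
        rwa [hD1] at this
      rw [e1, casc_fix (D-1) (p D) (fun s hs => pne D (le_refl _) s (by omega) (by omega))]
      simp [arcMap]
    · have ht1 : 1 ≤ t := by omega
      have htD2 : t < D := by omega
      have e0 : arcMap (p D) (p 0) (p t) = p t := by
        simp [arcMap, pne t htD D (le_refl _) (by omega)]
      rw [e0, casc_move hinj D (le_refl _) t htD2]
      have e1 : wordEval (zig p 1 (D-1)) (p (t+1)) = p (t-1) := by
        exact zig_back hinj (D-1) 1 t (le_refl _) ht1 (by omega) (by omega)
      rw [e1, casc_move hinj (D-1) (by omega) (t-1) (by omega)]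
      have : t - 1 + 1 = t := by omega
      rw [this]
      simp [arcMap, pne t htD 0 (by omega) (by omega)]
  · push_neg at hx
    have e0 : arcMap (p D) (p 0) x = x := by simp [arcMap, hx D (le_refl _)]
    rw [e0, casc_fix D x (fun s hs => hx s (by omega)),
      zig_fix (D-1) 1 x (fun s hs1 hs2 => hx s (by omega)),
      casc_fix (D-1) x (fun s hs => hx s (by omega))]
    simp [arcMap, hx 0 (by omega)]

omit [DecidableEq V] in
theorem fullWord_edges {T : V → V → Prop}
    (hpath : ∀ t, t < D → T (p t) (p (t+1)))
    (hback : ∀ t, 1 ≤ t → t < D → T (p (t+1)) (p (t-1)))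
    (hlast : T (p D) (p 0)) :
    ∀ e ∈ fullWord p D, T e.1 e.2 := by
  intro e he
  simp only [fullWord, List.mem_cons, List.mem_append] at he
  rcases he with rfl | (h | h) | h
  · exact hlast
  · exact casc_edges D (fun t ht => hpath t ht) e h
  · refine zig_edges (D-1) 1 (fun t ht1 ht2 => ⟨hback t ht1 (by omega), hpath t (by omega)⟩) e h
  · exact casc_edges (D-1) (fun t ht => hpath t (by omega)) e h

end FullEval



theorem chain_mem {R : V → V → Prop} {P : V → Prop}
    (hR : ∀ a b, R a b → P b) :
    ∀ (m : List V), m.Chain' R → (∀ z, m.head? = some z → P z) → ∀ x ∈ m, P x := by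
  intro m
  induction m with
  | nil => simp
  | cons a m ih =>
    intro hc hh x hx
    rcases List.mem_cons.1 hx with rfl | hx'
    · exact hh x rfl
    · refine ih (List.isChain_cons.1 hc).2 ?_ x hx'
      intro z hz
      exact hR a z ((List.isChain_cons.1 hc).1 z hz)

section Lower
variable [DecidableEq V] [Fintype V]

def ddist' (D : V → V → Prop) (u w : V) : ℕ :=
  sInf {l | ∃ p : List V, p.Chain' D ∧ p.head? = some u ∧ p.getLast? = some w ∧
    p.length = l + 1}

omit [DecidableEq V] [Fintype V] in
theorem ddist'_le {D : V → V → Prop} {u w : V} {p : List V} (hc : p.Chain' D)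
    (hh : p.head? = some u) (hl : p.getLast? = some w) : ddist' D u w ≤ p.length - 1 := by
  have hne : p ≠ [] := by rintro rfl; simp at hh
  have hlen : p.length - 1 + 1 = p.length := by
    have := List.length_pos_iff.2 hne; omega
  exact Nat.sInf_le ⟨p, hc, hh, hl, hlen.symm⟩

theorem lower_bound (hcard : 3 ≤ Fintype.card V)
    {T : V → V → Prop} (hT : IsTournament T)
    {u v : V} (huv : u ≠ v) (hnedge : ¬ T u v)
    {w : List (V × V)} (hedges : ∀ e ∈ w, T e.1 e.2) (heval : wordEval w = arcMap u v) :
    4 * ddist' T u v - 2 ≤ w.length := by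
  classical
  set d := ddist' T u v with hd
  set k := w.length with hk
  -- k ≥ 1
  have hk1 : 1 ≤ k := by
    rcases w with _ | ⟨e, w'⟩
    · exfalso
      have := congrFun heval u
      simp only [wordEval, List.foldl_nil, arcMap, if_pos rfl] at this
      exact huv this
    · simp [hk]
  set f : ℕ → V → V := fun i => wordEval (w.take i) with hf
  have hf0 : ∀ x, f 0 x = x := fun x => rfl
  have hfk : ∀ x, f k x = arcMap u v x := by
    intro x; rw [hf]; simp only [hk, List.take_length]; rw [heval]
  have hstep : ∀ i, i < k → ∃ s t : V, T s t ∧ (∀ x, f (i+1) x = arcMap s t (f i x)) := by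
    intro i hi
    have hi' : i < w.length := hi
    refine ⟨(w.get ⟨i, hi'⟩).1, (w.get ⟨i, hi'⟩).2, hedges _ (List.get_mem w ⟨i, hi'⟩), ?_⟩
    intro x
    rw [hf]
    simp only
    rw [List.take_succ, wordEval_append]
    have : w[i]? = some (w.get ⟨i, hi'⟩) := by
      rw [List.getElem?_eq_getElem hi']; rfl
    rw [this]
    rfl
  have hfact : ∀ i j, i ≤ j → ∀ x, f j x = wordEval ((w.take j).drop i) (f i x) := by
    intro i j hij x
    rw [hf]
    simp only
    conv_lhs => rw [← List.take_append_drop i (w.take j)]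
    rw [wordEval_append, List.take_take, min_eq_left hij]
  have hker_tau : ∀ x y : V, arcMap u v x = arcMap u v y →
      (x = y ∨ (x = u ∧ y = v) ∨ (x = v ∧ y = u)) := by
    intro x y
    unfold arcMap
    split_ifs with h1 h2 h2 <;> intro h <;> subst_eqs <;> tauto
  have hker_fwd : ∀ i, ∀ x y : V, f i x = f i y →
      (x = y ∨ (x = u ∧ y = v) ∨ (x = v ∧ y = u)) := by
    intro i x y hxy
    apply hker_tau
    rw [← hfk x, ← hfk y]
    rcases le_or_gt i k with h | h
    · rw [hfact i k h x, hfact i k h y, hxy]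
    · have hw : w.take i = w.take k := by
        rw [hk, List.take_length, List.take_of_length_le (le_of_lt h)]
      have : f i = f k := by rw [hf]; simp only [hw]
      rw [← this]; exact hxy
  -- first arc is (v, u)
  obtain ⟨s0, t0, hT0, hstep0⟩ := hstep 0 (by omega)
  have hs0t0 : s0 = v ∧ t0 = u := by
    have hne : s0 ≠ t0 := fun h => hT.1 s0 (by rw [← h] at hT0; exact hT0)
    have h1 : f 1 s0 = f 1 t0 := by
      rw [hstep0 s0, hstep0 t0, hf0, hf0]
      simp [arcMap, hne]
    rcases hker_fwd 1 s0 t0 h1 with h | ⟨ha, hb⟩ | ⟨ha, hb⟩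
    · exact absurd h hne
    · exact absurd (ha ▸ hb ▸ hT0) hnedge
    · exact ⟨ha, hb⟩
  have hf1 : ∀ x, f 1 x = arcMap v u x := by
    intro x; rw [hstep0 x, hf0, hs0t0.1, hs0t0.2]
  have hker_bwd : ∀ i, 1 ≤ i → f i u = f i v := by
    intro i hi
    rw [hfact 1 i hi u, hfact 1 i hi v]
    congr 1
    rw [hf1, hf1]
    simp [arcMap, huv]
  -- holes
  have hex : ∀ i, 1 ≤ i → ∃ h : V, ∀ x, f i x ≠ h := by
    intro i hi
    have hni : ¬ Function.Injective (f i) := fun hinj => huv (hinj (hker_bwd i hi))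
    by_contra hcon
    push_neg at hcon
    exact hni (Finite.injective_iff_surjective.2 hcon)
  have hcard_im : ∀ i, 1 ≤ i → ((Finset.univ.erase v).image (f i)).card =
      Fintype.card V - 1 := by
    intro i hi
    rw [Finset.card_image_of_injOn, Finset.card_erase_of_mem (Finset.mem_univ v),
      Finset.card_univ]
    intro x hx y hy hxy
    simp only [Finset.coe_erase, Set.mem_diff, Set.mem_singleton_iff] at hx hy
    rcases hker_fwd i x y hxy with h | ⟨h1, h2⟩ | ⟨h1, h2⟩
    · exact h
    · exact absurd h2 hy.2
    · exact absurd h1 hx.2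
  have huniq : ∀ i, 1 ≤ i → ∀ h1 h2 : V, (∀ x, f i x ≠ h1) → (∀ x, f i x ≠ h2) →
      h1 = h2 := by
    intro i hi h1 h2 hh1 hh2
    by_contra hne
    have hsub : (Finset.univ.erase v).image (f i) ⊆ Finset.univ \ {h1, h2} := by
      intro z hz
      simp only [Finset.mem_image] at hz
      obtain ⟨x, _, rfl⟩ := hz
      simp only [Finset.mem_sdiff, Finset.mem_univ, true_and, Finset.mem_insert,
        Finset.mem_singleton]
      push_neg
      exact ⟨hh1 x, hh2 x⟩
    have hle := Finset.card_le_card hsub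
    rw [hcard_im i hi, Finset.card_sdiff_of_subset (by simp)] at hle
    have : ({h1, h2} : Finset V).card = 2 := by
      rw [Finset.card_insert_of_notMem (by simp [hne]), Finset.card_singleton]
    rw [Finset.card_univ, this] at hle
    omega
  let hol : ℕ → V := fun i => if hi : 1 ≤ i then Classical.choose (hex i hi) else u
  have hol_spec : ∀ i, 1 ≤ i → ∀ x, f i x ≠ hol i := by
    intro i hi x
    show f i x ≠ (if hi : 1 ≤ i then Classical.choose (hex i hi) else u)
    rw [dif_pos hi]
    exact Classical.choose_spec (hex i hi) x
  have hol_uniq : ∀ i, 1 ≤ i → ∀ h : V, (∀ x, f i x ≠ h) → h = hol i := by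
    intro i hi h hh
    exact huniq i hi h (hol i) hh (hol_spec i hi)
  have hol1 : hol 1 = v := by
    refine (hol_uniq 1 (le_refl _) v ?_).symm
    intro x
    rw [hf1]
    unfold arcMap
    split_ifs with h
    · exact huv
    · exact h
  have holk : hol k = u := by
    refine (hol_uniq k hk1 u ?_).symm
    intro x
    rw [hfk]
    unfold arcMap
    split_ifs with h
    · exact fun hc => huv (hc.symm)
    · exact h
  have hol_step : ∀ i, 1 ≤ i → i < k → hol (i+1) = hol i ∨ T (hol (i+1)) (hol i) := by
    intro i hi1 hik
    obtain ⟨s, t, hTst, hsi⟩ := hstep i hik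
    have hst : s ≠ t := fun h => hT.1 s (by rw [← h] at hTst; exact hTst)
    by_cases hs : ∀ x, f i x ≠ s
    · left
      refine (hol_uniq (i+1) (by omega) (hol i) ?_).symm
      intro x
      rw [hsi x]
      have : arcMap s t (f i x) = f i x := by simp [arcMap, hs x]
      rw [this]
      exact hol_spec i hi1 x
    · push_neg at hs
      obtain ⟨a, ha⟩ := hs
      have hthol : t = hol i := by
        apply hol_uniq i hi1
        intro b hb
        have hab : f (i+1) a = f (i+1) b := by
          rw [hsi a, hsi b, ha, hb]
          simp [arcMap, hst.symm]
        have hanb : a ≠ b := fun h => hst (by rw [← ha, ← hb, h])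
        rcases hker_fwd (i+1) a b hab with h | ⟨h1, h2⟩ | ⟨h1, h2⟩
        · exact hanb h
        · subst h1; subst h2
          exact hst (by rw [← ha, ← hb, hker_bwd i hi1])
        · subst h1; subst h2
          exact hst (by rw [← ha, ← hb, hker_bwd i hi1])
      have hshol : s = hol (i+1) := by
        apply hol_uniq (i+1) (by omega)
        intro x
        rw [hsi x]
        exact arcMap_ne_src hst
      right
      rw [← hshol, ← hthol]
      exact hTst
  -- the set of holes
  set HS : Finset V := (Finset.Icc 1 k).image hol with hHS
  have hmemHS : ∀ i, 1 ≤ i → i ≤ k → hol i ∈ HS := fun i h1 h2 =>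
    Finset.mem_image.2 ⟨i, Finset.mem_Icc.2 ⟨h1, h2⟩, rfl⟩
  set R' : V → V → Prop := fun a b => T a b ∧ a ∈ HS ∧ b ∈ HS with hR'
  have hrtg : ∀ i, 1 ≤ i → i ≤ k → Relation.ReflTransGen R' (hol i) v := by
    intro i
    induction i with
    | zero => omega
    | succ j ih =>
      intro h1 h2
      rcases Nat.lt_or_ge 1 (j+1) with hlt | hge
      · have hj1 : 1 ≤ j := by omega
        have hjk : j < k := by omega
        rcases hol_step j hj1 hjk with heq | hT'
        · rw [heq]; exact ih hj1 (by omega)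
        · exact Relation.ReflTransGen.head
            ⟨hT', hmemHS (j+1) (by omega) h2, hmemHS j hj1 (by omega)⟩ (ih hj1 (by omega))
      · have : j = 0 := by omega
        subst this
        rw [hol1]
  have hrtguv : Relation.ReflTransGen R' u v := by
    have := hrtg k hk1 (le_refl _)
    rwa [holk] at this
  obtain ⟨l0, hl0c, hl0h, hl0l⟩ := chain_of_rtg hrtguv
  obtain ⟨q, hqc, hqn, hqh, hql, _⟩ :=
    chain_extract l0 hl0c (by rintro rfl; simp at hl0h)
  rw [hl0h] at hqh
  rw [hl0l] at hql
  have hq2 : 2 ≤ q.length := by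
    match q, hqh, hql with
    | [a], hqh, hql =>
      exfalso
      simp only [List.head?_cons, Option.some.injEq] at hqh
      simp only [List.getLast?_singleton, Option.some.injEq] at hql
      exact huv (by rw [← hqh, ← hql])
    | a :: b :: q', _, _ => simp
  have hqHS : ∀ x ∈ q, x ∈ HS := by
    refine chain_mem (fun a b hab => hab.2.2) q hqc ?_
    intro z hz
    rw [hqh] at hz
    injection hz with hz
    subst hz
    rw [← holk]
    exact hmemHS k hk1 (le_refl _)
  have hqcT : q.Chain' T := hqc.imp (fun a b hab => hab.1)
  have hHScard : d + 1 ≤ HS.card := by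
    have h1 : q.toFinset.card = q.length := List.toFinset_card_of_nodup hqn
    have h2 : q.toFinset ⊆ HS := fun x hx => hqHS x (List.mem_toFinset.1 hx)
    have h3 := Finset.card_le_card h2
    have hdl := ddist'_le hqcT hqh hql
    omega
  set Wfin : Finset V := HS \ {u, v} with hWfin
  have hWcard : d - 1 ≤ Wfin.card := by
    have h1 := Finset.le_card_sdiff ({u, v} : Finset V) HS
    rw [← hWfin] at h1
    have hpair : ({u, v} : Finset V).card ≤ 2 := by
      have := Finset.card_insert_le u ({v} : Finset V)
      simpa using this
    omega
  -- movement counting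
  set mv : V → Finset ℕ :=
    fun x => (Finset.Ico 1 k).filter (fun j => f (j+1) x ≠ f j x) with hmv
  have hsteps : ∀ x : V, ∀ j, j < k →
      f (j+1) x = f j x ∨ T (f j x) (f (j+1) x) := by
    intro x j hjk
    obtain ⟨s, t, hTst, hsi⟩ := hstep j hjk
    by_cases hfs : f j x = s
    · right
      rw [hsi x, hfs]
      simpa [arcMap] using hTst
    · left
      rw [hsi x]
      simp [arcMap, hfs]
  -- (β) the token u moves at least d times
  have h1u : f 1 u = u := by rw [hf1]; simp [arcMap, huv]
  have hku : f k u = v := by rw [hfk]; simp [arcMap]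
  have hmu : d ≤ (mv u).card := by
    obtain ⟨p, hpc, hph, hpl, hplen⟩ :=
      traj_chain (T := T) (fun j => f j u) 1 k hk1
        (fun j h1 h2 => hsteps u j h2)
    have hdl := ddist'_le hpc (by rw [hph, h1u]) (by rw [hpl, hku])
    rw [hplen] at hdl
    have hfold : (Finset.Ico 1 k).filter (fun j => f (j+1) u ≠ f j u) = mv u := by
      rw [hmv]
    rw [hfold] at hdl
    omega
  -- (γ) each moved token moves at least 3 times
  have hmw : ∀ y ∈ Wfin, 3 ≤ (mv y).card := by
    intro y hy
    have hyHS : y ∈ HS := (Finset.mem_sdiff.1 hy).1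
    have hyuv : y ≠ u ∧ y ≠ v := by
      have h2 := (Finset.mem_sdiff.1 hy).2
      simp only [Finset.mem_insert, Finset.mem_singleton] at h2
      push_neg at h2
      exact h2
    obtain ⟨i, hiIcc, hiy⟩ := Finset.mem_image.1 hyHS
    rw [Finset.mem_Icc] at hiIcc
    have h1y : f 1 y = y := by rw [hf1]; simp [arcMap, hyuv.2]
    have hky : f k y = y := by rw [hfk]; simp [arcMap, hyuv.1]
    have hiy' : f i y ≠ y := by
      have := hol_spec i hiIcc.1 y
      rwa [hiy] at this
    have hc1 : 1 ≤ (mv y).card := by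
      by_contra hcon
      push_neg at hcon
      have hempty : mv y = ∅ := Finset.card_eq_zero.1 (by omega)
      have hall : ∀ j, 1 ≤ j → j < i → f (j+1) y = f j y := by
        intro j hj1 hji
        by_contra hne
        have : j ∈ mv y := by
          rw [hmv]
          simp only [Finset.mem_filter, Finset.mem_Ico]
          exact ⟨⟨hj1, by omega⟩, hne⟩
        rw [hempty] at this
        simp at this
      have := traj_const (g := fun j => f j y) 1 i hiIcc.1 hall
      rw [h1y] at this
      exact hiy' this
    by_contra hcon
    push_neg at hcon
    obtain ⟨p, hpc, hph, hpl, hplen⟩ :=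
      traj_chain (T := T) (fun j => f j y) 1 k hk1
        (fun j h1 h2 => hsteps y j h2)
    simp only [h1y, hky] at hph hpl
    have hcardeq : ((Finset.Ico 1 k).filter (fun j => f (j+1) y ≠ f j y)).card
        = (mv y).card := by rw [hmv]
    rw [hcardeq] at hplen
    have hc12 : (mv y).card = 1 ∨ (mv y).card = 2 := by omega
    rcases hc12 with hc | hc
    · rw [hc] at hplen
      obtain ⟨a, b, rfl⟩ := List.length_eq_two.1 hplen
      simp only [List.head?_cons, Option.some.injEq] at hph
      have hbl : b = y := by
        simpa using hpl
      have hTab : T a b := (List.isChain_cons_cons.1 hpc).1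
      rw [hph, hbl] at hTab
      exact hT.1 y hTab
    · rw [hc] at hplen
      obtain ⟨a, b, c', rfl⟩ := List.length_eq_three.1 hplen
      simp only [List.head?_cons, Option.some.injEq] at hph
      have hcl : c' = y := by
        simpa using hpl
      have hTab : T a b := (List.isChain_cons_cons.1 hpc).1
      have hTbc : T b c' := (List.isChain_cons_cons.1 (List.isChain_cons_cons.1 hpc).2).1
      rw [hph] at hTab
      rw [hcl] at hTbc
      have hyb : y ≠ b := fun h => hT.1 y (h ▸ hTab)
      exact (hT.2 y b hyb).2 ⟨hTab, hTbc⟩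
  -- (α) at most one relevant token moves per step
  have hdisj : u ∉ Wfin := by simp [hWfin]
  set T0 : Finset V := insert u Wfin with hT0def
  have hvT0 : v ∉ T0 := by
    intro hv
    rcases Finset.mem_insert.1 hv with h | h
    · exact huv h.symm
    · rw [hWfin] at h
      exact (Finset.mem_sdiff.1 h).2 (by simp)
  have hsum : ∑ x ∈ T0, (mv x).card ≤ k - 1 := by
    rw [← Finset.card_sigma]
    have hle := Finset.card_le_card_of_injOn (fun q => q.2)
      (s := T0.sigma mv) (t := Finset.Ico 1 k) ?_ ?_
    · rwa [Nat.card_Ico, show k - 1 = k - 1 from rfl] at hle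
    · intro q hq
      have := (Finset.mem_sigma.1 hq).2
      rw [hmv] at this
      exact (Finset.mem_filter.1 this).1
    · rintro ⟨x, j⟩ hq1 ⟨x', j'⟩ hq2 hjj
      simp only at hjj
      subst hjj
      have hm1 := (Finset.mem_sigma.1 hq1).2
      have hm2 := (Finset.mem_sigma.1 hq2).2
      have hx1 := (Finset.mem_sigma.1 hq1).1
      have hx2 := (Finset.mem_sigma.1 hq2).1
      rw [hmv] at hm1 hm2
      have hj1 := (Finset.mem_filter.1 hm1).1
      rw [Finset.mem_Ico] at hj1
      obtain ⟨s, t, hTst, hsi⟩ := hstep j hj1.2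
      have hfx : f j x = s := by
        have h2 := (Finset.mem_filter.1 hm1).2
        rw [hsi x] at h2
        exact arcMap_ne_self h2
      have hfx' : f j x' = s := by
        have h2 := (Finset.mem_filter.1 hm2).2
        rw [hsi x'] at h2
        exact arcMap_ne_self h2
      have hxx : x = x' := by
        rcases hker_fwd j x x' (by rw [hfx, hfx']) with h | ⟨h1, h2⟩ | ⟨h1, h2⟩
        · exact h
        · exact absurd (h2 ▸ hx2) hvT0
        · exact absurd (h1 ▸ hx1) hvT0
      subst hxx
      rfl
  have hsplit : ∑ x ∈ T0, (mv x).card = (mv u).card + ∑ x ∈ Wfin, (mv x).card :=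
    Finset.sum_insert hdisj
  have hWsum : 3 * Wfin.card ≤ ∑ x ∈ Wfin, (mv x).card := by
    have := Finset.card_nsmul_le_sum Wfin (fun x => (mv x).card) 3 hmw
    simpa [mul_comm] using this
  omega


end Lower

end Stmt18Aux

open Stmt18Aux

/-- for `n ≥ 3`, a strong tournament `T` on `{1,…,n}` and distinct vertices
`u, v` with `(u,v)` not an edge of `T`, `ℓ(T, (u→v)) = 4·d_T(u,v) − 2`. -/
theorem stmt18 (n : ℕ) (hn : 3 ≤ n) (T : Fin n → Fin n → Prop)
    (hT : IsTournament T) (hstrong : IsStrongDigraph T)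
    (u v : Fin n) (huv : u ≠ v) (hnedge : ¬ T u v) :
    arcLen T (arcMap u v) = 4 * ddist T u v - 2 := by

  classical
  set d := ddist T u v with hd
  -- a geodesic exists
  have hne : {l | ∃ p : List (Fin n), p.Chain' T ∧ p.head? = some u ∧
      p.getLast? = some v ∧ p.length = l + 1}.Nonempty := by
    obtain ⟨l, hc, hh, hl⟩ := chain_of_rtg (hstrong u v)
    have hnil : l ≠ [] := by rintro rfl; simp at hh
    exact ⟨l.length - 1, l, hc, hh, hl, by have := List.length_pos_iff.2 hnil; omega⟩
  have hmem : ∃ p : List (Fin n), p.Chain' T ∧ p.head? = some u ∧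
      p.getLast? = some v ∧ p.length = d + 1 := Nat.sInf_mem hne
  obtain ⟨P0, hP0c, hP0h, hP0l, hP0len⟩ := hmem
  obtain ⟨P, hPc, hPn, hPh, hPl, hPle⟩ :=
    chain_extract P0 hP0c (by rintro rfl; simp at hP0h)
  rw [hP0h] at hPh
  rw [hP0l] at hPl
  rw [hP0len] at hPle
  have hPne : P ≠ [] := by rintro rfl; simp at hPh
  have hdle : ddist' T u v ≤ P.length - 1 := ddist'_le hPc hPh hPl
  have hdd : ddist' T u v = d := rfl
  rw [hdd] at hdle
  have hPlen : P.length = d + 1 := by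
    have := List.length_pos_iff.2 hPne
    omega
  -- d ≥ 2
  have hd2 : 2 ≤ d := by
    by_contra hlt
    push_neg at hlt
    have hcase : d = 0 ∨ d = 1 := by omega
    rcases hcase with h0 | h1
    · rw [h0] at hPlen
      obtain ⟨a, rfl⟩ := List.length_eq_one_iff.1 hPlen
      simp only [List.head?_cons, Option.some.injEq] at hPh
      have : a = v := by simpa using hPl
      exact huv (by rw [← hPh, this])
    · rw [h1] at hPlen
      obtain ⟨a, b, rfl⟩ := List.length_eq_two.1 hPlen
      simp only [List.head?_cons, Option.some.injEq] at hPh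
      have hbv : b = v := by simpa using hPl
      have hTab : T a b := (List.isChain_cons_cons.1 hPc).1
      rw [hPh, hbv] at hTab
      exact hnedge hTab
  -- the geodesic as a function
  set p : ℕ → Fin n := fun i => P.getD i u with hp
  have hpget : ∀ (i : ℕ) (hi : i < P.length), p i = P[i]'hi := by
    intro i hi
    rw [hp]
    exact List.getD_eq_getElem P u hi
  have hinj : ∀ i ≤ d, ∀ j ≤ d, p i = p j → i = j := by
    intro i hi j hj hij
    have hi' : i < P.length := by omega
    have hj' : j < P.length := by omega
    rw [hpget i hi', hpget j hj'] at hij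
    have h2 : (⟨i, hi'⟩ : Fin P.length) = ⟨j, hj'⟩ :=
      List.nodup_iff_injective_getElem.1 hPn hij
    exact congrArg Fin.val h2
  have hp0 : p 0 = u := by
    have h0 : 0 < P.length := by omega
    rw [hpget 0 h0]
    rw [List.head?_eq_getElem?] at hPh
    rw [List.getElem?_eq_getElem h0] at hPh
    injection hPh
  have hpd : p d = v := by
    have hdP : d < P.length := by omega
    rw [hpget d hdP]
    rw [List.getLast?_eq_getElem?, hPlen] at hPl
    simp only [Nat.add_sub_cancel] at hPl
    rw [List.getElem?_eq_getElem hdP] at hPl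
    injection hPl
  have hpath : ∀ t, t < d → T (p t) (p (t+1)) := by
    intro t ht
    have h1 : t < P.length - 1 := by omega
    have := List.isChain_iff_getElem.1 hPc t (by omega)
    rw [hpget t (by omega), hpget (t+1) (by omega)]
    simpa using this
  have hback : ∀ t, 1 ≤ t → t < d → T (p (t+1)) (p (t-1)) := by
    intro t h1 h2
    have hne2 : p (t+1) ≠ p (t-1) := fun h => by
      have := hinj (t+1) (by omega) (t-1) (by omega) h
      omega
    rcases (hT.2 _ _ hne2).1 with h | h
    · exact h
    · exfalso
      -- the shortcut path
      set Q : List (Fin n) := P.take t ++ P.drop (t+1) with hQ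
      have htake_last : (P.take t).getLast? = some (p (t-1)) := by
        rw [List.getLast?_eq_getElem?, List.length_take]
        have hmin : min t P.length = t := by omega
        rw [hmin, List.getElem?_take, if_pos (by omega : t - 1 < t),
          List.getElem?_eq_getElem (by omega : t - 1 < P.length)]
        rw [hpget (t-1) (by omega)]
      have hdrop_head : (P.drop (t+1)).head? = some (p (t+1)) := by
        rw [List.head?_drop, List.getElem?_eq_getElem (by omega : t + 1 < P.length),
          hpget (t+1) (by omega)]
      have hQc : Q.Chain' T := by
        rw [hQ]; apply List.isChain_append.2
        refine ⟨hPc.take t, hPc.drop (t+1), ?_⟩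
        intro x hx y hy
        rw [htake_last] at hx
        rw [hdrop_head] at hy
        simp only [Option.mem_def, Option.some.injEq] at hx hy
        rw [← hx, ← hy]
        exact h
      have htne : P.take t ≠ [] := by
        intro hc
        have := congrArg List.length hc
        simp only [List.length_take, List.length_nil] at this
        omega
      have hdne : P.drop (t+1) ≠ [] := by
        intro hc
        have := congrArg List.length hc
        simp only [List.length_drop, List.length_nil] at this
        omega
      have hQh : Q.head? = some u := by
        rw [hQ, List.head?_append_of_ne_nil]
        · rw [List.head?_eq_getElem?, List.getElem?_take, if_pos (by omega : 0 < t),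
            List.getElem?_eq_getElem (by omega : 0 < P.length)]
          rw [← hpget 0 (by omega), hp0]
        · exact htne
      have hQl : Q.getLast? = some v := by
        rw [hQ, List.getLast?_append_of_ne_nil _ hdne]
        have : P = P.take (t+1) ++ P.drop (t+1) := (List.take_append_drop (t+1) P).symm
        rw [this, List.getLast?_append_of_ne_nil _ hdne] at hPl
        exact hPl
      have hQlen : Q.length = d := by
        rw [hQ, List.length_append, List.length_take, List.length_drop]
        omega
      have := ddist'_le hQc hQh hQl
      rw [hdd, hQlen] at this
      omega
  have hlastEdge : T (p d) (p 0) := by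
    rw [hp0, hpd]
    rcases (hT.2 u v huv).1 with h | h
    · exact absurd h hnedge
    · exact h
  -- the word
  set W : List (Fin n × Fin n) := fullWord p d with hW
  have hWlen : W.length = 4 * d - 2 := fullWord_length p hd2
  have hWedges : ∀ e ∈ W, T e.1 e.2 :=
    fullWord_edges hpath hback hlastEdge
  have hWeval : wordEval W = arcMap u v := by
    rw [hW, fullWord_eval hinj hd2, hp0, hpd]
  have hWmem : (4 * d - 2) ∈ {k | ∃ w : List (Fin n × Fin n), w.length = k ∧
      (∀ e ∈ w, T e.1 e.2) ∧ wordEval w = arcMap u v} := ⟨W, hWlen, hWedges, hWeval⟩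
  apply le_antisymm
  · exact Nat.sInf_le hWmem
  · obtain ⟨w', hlen', hed', hev'⟩ := Nat.sInf_mem (⟨_, hWmem⟩ :
      Set.Nonempty {k | ∃ w : List (Fin n × Fin n), w.length = k ∧
        (∀ e ∈ w, T e.1 e.2) ∧ wordEval w = arcMap u v})
    have hlow := lower_bound (by simpa using hn) hT huv hnedge hed' hev'
    rw [hdd] at hlow
    have heq : arcLen T (arcMap u v) = w'.length := hlen'.symm
    rw [heq]
    exact hlow
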